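/- Case 2 (drift) disparity bound: With the same setup and hypotheses as the disparity score upper bound, if y_t is almost surely the one-hot vector of class 1 and y_v is almost surely the one-hot vector of class 2 (with c ≥ 2), and ‖E[X'_t]‖ ≤ σ, then ‖E[g_t] − E[g_v]‖ ≤ √(2(1 + σ²)). -/

import Mathlib

open scoped RealInnerProductSpace

/-- Outer product of two Euclidean vectors, flattened to a Euclidean vector. -/
def eOuter {c d : ℕ} (u : EuclideanSpace ℝ (Fin c)) (x : EuclideanSpace ℝ (Fin d)) :
    EuclideanSpace ℝ (Fin c × Fin d) :=
  WithLp.toLp 2 (fun q : Fin c × Fin d => u q.1 * x q.2)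

/-- Concatenation of two Euclidean vectors. -/
def eConcat {ι κ : Type*} (a : EuclideanSpace ℝ ι) (b : EuclideanSpace ℝ κ) :
    EuclideanSpace ℝ (ι ⊕ κ) :=
  WithLp.toLp 2 (Sum.elim a b)

/-- Expectation of a vector-valued random variable on a finite probability space
with weights `p`. -/
def eExpect {Ω : Type*} [Fintype Ω] (p : Ω → ℝ) {E : Type*} [AddCommMonoid E] [Module ℝ E]
    (Y : Ω → E) : E :=
  ∑ ω, p ω • Y ω

theorem euc_sum_apply {ι : Type*} {Ω : Type*} (s : Finset Ω) (f : Ω → EuclideanSpace ℝ ι)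
    (i : ι) : (∑ ω ∈ s, f ω) i = ∑ ω ∈ s, f ω i :=
  map_sum (PiLp.projₗ (𝕜 := ℝ) 2 (fun _ : ι => ℝ) i) f s

theorem eExpect_sub {Ω : Type*} [Fintype Ω] (p : Ω → ℝ) {E : Type*} [AddCommGroup E]
    [Module ℝ E] (f g : Ω → E) :
    eExpect p (fun ω => f ω - g ω) = eExpect p f - eExpect p g := by
  simp [eExpect, smul_sub, Finset.sum_sub_distrib]

theorem eExpect_add {Ω : Type*} [Fintype Ω] (p : Ω → ℝ) {E : Type*} [AddCommGroup E]
    [Module ℝ E] (f g : Ω → E) :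
    eExpect p (fun ω => f ω + g ω) = eExpect p f + eExpect p g := by
  simp [eExpect, smul_add, Finset.sum_add_distrib]

theorem eExpect_const {Ω : Type*} [Fintype Ω] {p : Ω → ℝ} (hsum : ∑ ω, p ω = 1)
    {E : Type*} [AddCommMonoid E] [Module ℝ E] (v : E) : eExpect p (fun _ => v) = v := by
  simp [eExpect, ← Finset.sum_smul, hsum]

theorem eExpect_concat {Ω : Type*} [Fintype Ω] (p : Ω → ℝ) {ι κ : Type*}
    (f : Ω → EuclideanSpace ℝ ι) (g : Ω → EuclideanSpace ℝ κ) :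
    eExpect p (fun ω => eConcat (f ω) (g ω)) = eConcat (eExpect p f) (eExpect p g) := by
  ext i
  cases i <;>
    simp [eExpect, eConcat, euc_sum_apply, PiLp.smul_apply, smul_eq_mul]

theorem eConcat_sub {ι κ : Type*} (a a' : EuclideanSpace ℝ ι) (b b' : EuclideanSpace ℝ κ) :
    eConcat a b - eConcat a' b' = eConcat (a - a') (b - b') := by
  ext i
  cases i <;> simp [eConcat, PiLp.sub_apply]

theorem eOuter_sub_left {c d : ℕ} (u v : EuclideanSpace ℝ (Fin c))
    (x : EuclideanSpace ℝ (Fin d)) : eOuter (u - v) x = eOuter u x - eOuter v x := by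
  ext q
  simp [eOuter, PiLp.sub_apply, sub_mul]

theorem eOuter_sub_right {c d : ℕ} (u : EuclideanSpace ℝ (Fin c))
    (x y : EuclideanSpace ℝ (Fin d)) : eOuter u (x - y) = eOuter u x - eOuter u y := by
  ext q
  simp [eOuter, PiLp.sub_apply, mul_sub]

theorem eOuter_zero_left {c d : ℕ} (x : EuclideanSpace ℝ (Fin d)) :
    eOuter (0 : EuclideanSpace ℝ (Fin c)) x = 0 := by
  ext q
  simp [eOuter]

theorem eOuter_zero_right {c d : ℕ} (u : EuclideanSpace ℝ (Fin c)) :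
    eOuter u (0 : EuclideanSpace ℝ (Fin d)) = 0 := by
  ext q
  simp [eOuter]

theorem norm_eOuter {c d : ℕ} (u : EuclideanSpace ℝ (Fin c)) (x : EuclideanSpace ℝ (Fin d)) :
    ‖eOuter u x‖ = ‖u‖ * ‖x‖ := by
  rw [EuclideanSpace.norm_eq, EuclideanSpace.norm_eq, EuclideanSpace.norm_eq,
    ← Real.sqrt_mul (by positivity)]
  congr 1
  rw [Fintype.sum_prod_type, Finset.sum_mul_sum]
  refine Finset.sum_congr rfl fun i _ => Finset.sum_congr rfl fun j _ => ?_
  simp [eOuter, abs_mul, mul_pow]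

theorem norm_eConcat {ι κ : Type*} [Fintype ι] [Fintype κ] (a : EuclideanSpace ℝ ι)
    (b : EuclideanSpace ℝ κ) : ‖eConcat a b‖ = Real.sqrt (‖a‖ ^ 2 + ‖b‖ ^ 2) := by
  rw [EuclideanSpace.norm_eq, Fintype.sum_sum_type]
  congr 1
  rw [EuclideanSpace.norm_eq, EuclideanSpace.norm_eq,
    Real.sq_sqrt (by positivity), Real.sq_sqrt (by positivity)]
  rfl

theorem case2_drift_disparity {Ω : Type*} [Fintype Ω] (p : Ω → ℝ)
    (hp : ∀ ω, 0 ≤ p ω) (hsum : ∑ ω, p ω = 1)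
    {c d' : ℕ} (hc : 2 ≤ c) (yt yv yht yhv : Ω → EuclideanSpace ℝ (Fin c))
    (Xt Xv : Ω → EuclideanSpace ℝ (Fin d')) (σ : ℝ)
    (h1 : eExpect p yht = eExpect p yhv)
    (h2 : eExpect p Xt = eExpect p Xv)
    (h3 : eExpect p (fun ω => eOuter (yht ω - yhv ω) (Xt ω))
        = eOuter (eExpect p (fun ω => yht ω - yhv ω)) (eExpect p Xt))
    (h4 : eExpect p (fun ω => eOuter (yhv ω - yv ω) (Xt ω - Xv ω))
        = eOuter (eExpect p (fun ω => yhv ω - yv ω)) (eExpect p (fun ω => Xt ω - Xv ω)))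
    (h5 : eExpect p (fun ω => eOuter (yt ω - yv ω) (Xt ω))
        = eOuter (eExpect p (fun ω => yt ω - yv ω)) (eExpect p Xt))
    (hσ : ‖eExpect p Xt‖ ≤ σ)
    (hyt : ∀ ω, yt ω = EuclideanSpace.single (⟨0, by omega⟩ : Fin c) (1 : ℝ))
    (hyv : ∀ ω, yv ω = EuclideanSpace.single (⟨1, by omega⟩ : Fin c) (1 : ℝ)) :
    ‖eExpect p (fun ω => eConcat (yht ω - yt ω) (eOuter (yht ω - yt ω) (Xt ω)))
        - eExpect p (fun ω => eConcat (yhv ω - yv ω) (eOuter (yhv ω - yv ω) (Xv ω)))‖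
      ≤ Real.sqrt (2 * (1 + σ ^ 2)) := by
  set e1 : EuclideanSpace ℝ (Fin c) := EuclideanSpace.single (⟨0, by omega⟩ : Fin c) (1 : ℝ)
  set e2 : EuclideanSpace ℝ (Fin c) := EuclideanSpace.single (⟨1, by omega⟩ : Fin c) (1 : ℝ)
  set m : EuclideanSpace ℝ (Fin d') := eExpect p Xt with hm
  have hEyt : eExpect p yt = e1 := by
    rw [show yt = fun _ => e1 from funext hyt]; exact eExpect_const hsum e1
  have hEyv : eExpect p yv = e2 := by
    rw [show yv = fun _ => e2 from funext hyv]; exact eExpect_const hsum e2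
  -- first component
  have hfst : eExpect p (fun ω => yht ω - yt ω) - eExpect p (fun ω => yhv ω - yv ω)
      = e2 - e1 := by
    rw [eExpect_sub, eExpect_sub, h1, hEyt, hEyv]; abel
  -- vanishing cross terms
  have hE1 : eExpect p (fun ω => yht ω - yhv ω) = 0 := by
    rw [eExpect_sub, h1, sub_self]
  have hE2 : eExpect p (fun ω => Xt ω - Xv ω) = 0 := by
    rw [eExpect_sub, ← hm, h2, sub_self]
  have h3' : eExpect p (fun ω => eOuter (yht ω - yhv ω) (Xt ω)) = 0 := by
    rw [h3, hE1, eOuter_zero_left]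
  have h4' : eExpect p (fun ω => eOuter (yhv ω - yv ω) (Xt ω - Xv ω)) = 0 := by
    rw [h4, hE2, eOuter_zero_right]
  have h5' : eExpect p (fun ω => eOuter (yt ω - yv ω) (Xt ω)) = eOuter (e1 - e2) m := by
    rw [h5, eExpect_sub, hEyt, hEyv]
  -- second component
  have hsnd : eExpect p (fun ω => eOuter (yht ω - yt ω) (Xt ω))
      - eExpect p (fun ω => eOuter (yhv ω - yv ω) (Xv ω)) = eOuter (e2 - e1) m := by
    have key : (fun ω => eOuter (yht ω - yt ω) (Xt ω) - eOuter (yhv ω - yv ω) (Xv ω))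
        = fun ω => (eOuter (yht ω - yhv ω) (Xt ω) + eOuter (yhv ω - yv ω) (Xt ω - Xv ω))
            - eOuter (yt ω - yv ω) (Xt ω) := by
      funext ω
      simp only [eOuter_sub_left, eOuter_sub_right]
      abel
    rw [← eExpect_sub, key, eExpect_sub, eExpect_add, h3', h4', h5']
    simp only [eOuter_sub_left]
    abel
  have hTV : eExpect p (fun ω => eConcat (yht ω - yt ω) (eOuter (yht ω - yt ω) (Xt ω)))
      - eExpect p (fun ω => eConcat (yhv ω - yv ω) (eOuter (yhv ω - yv ω) (Xv ω)))
      = eConcat (e2 - e1) (eOuter (e2 - e1) m) := by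
    rw [eExpect_concat, eExpect_concat, eConcat_sub, hfst, hsnd]
  have hw : ‖e2 - e1‖ = Real.sqrt 2 := by
    have hne : (⟨1, by omega⟩ : Fin c) ≠ (⟨0, by omega⟩ : Fin c) := by
      simp [Fin.ext_iff]
    have hinner : ⟪e2, e1⟫ = 0 := by
      simp [e1, e2, EuclideanSpace.inner_single_left, EuclideanSpace.single_apply, hne]
    have h22 : ‖e2 - e1‖ ^ 2 = 2 := by
      rw [norm_sub_sq_real, hinner]
      simp [e1, e2, EuclideanSpace.norm_single]
      norm_num
    rw [← h22, Real.sqrt_sq (norm_nonneg _)]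
  rw [hTV, norm_eConcat, norm_eOuter, hw]
  apply Real.sqrt_le_sqrt
  have h2' : Real.sqrt 2 ^ 2 = 2 := Real.sq_sqrt (by norm_num)
  have hm0 : 0 ≤ ‖m‖ := norm_nonneg _
  rw [mul_pow, h2']
  nlinarith [hσ, hm0]
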